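/- Let G be a group with a nonzero class in H²(G, U(1)) realized by a projective unitary action α : G → PU(ℋ). Then there is no unit vector ψ ∈ ℋ whose induced state on B(ℋ) is G-invariant, i.e. no unit vector such that for some (equivalently any) lift 𝒱 : G → U(ℋ), the vector state A ↦ ⟨ψ, Aψ⟩ satisfies ⟨ψ, 𝒱(g)A𝒱(g)*ψ⟩ = ⟨ψ, Aψ⟩ for all A ∈ B(ℋ) and g ∈ G. -/

import Mathlib

noncomputable section

variable (H : Type*) [NormedAddCommGroup H] [InnerProductSpace ℂ H] [CompleteSpace H]

/-- The central subgroup of scalar unitaries inside the unitary group of B(H). -/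
def scalarUnitary : Subgroup (unitary (H →L[ℂ] H)) where
  carrier := {u | ∃ c : ℂ, (u : H →L[ℂ] H) = c • 1}
  one_mem' := ⟨1, by rw [OneMemClass.coe_one, one_smul]⟩
  mul_mem' := by
    rintro u v ⟨c, hc⟩ ⟨d, hd⟩
    exact ⟨c * d, by rw [MulMemClass.coe_mul, hc, hd, smul_mul_smul_comm, one_mul]⟩
  inv_mem' := by
    rintro u ⟨c, hc⟩
    exact ⟨star c, by
      rw [← Unitary.star_eq_inv, Unitary.coe_star, hc, star_smul, star_one]⟩

instance scalarUnitary_normal : (scalarUnitary H).Normal := by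
  constructor
  rintro u ⟨c, hc⟩ g
  refine ⟨c, ?_⟩
  rw [MulMemClass.coe_mul, MulMemClass.coe_mul, ← Unitary.star_eq_inv,
    Unitary.coe_star, hc, mul_smul_comm, mul_one, smul_mul_assoc,
    Unitary.mul_star_self_of_mem g.2]

/-- The projective unitary group PU(H) = U(H)/U(1). -/
def PU := unitary (H →L[ℂ] H) ⧸ scalarUnitary H

instance : Group (PU H) := QuotientGroup.Quotient.group (scalarUnitary H)

/-- The quotient map U(H) → PU(H). -/
def toPU : unitary (H →L[ℂ] H) →* PU H := QuotientGroup.mk' (scalarUnitary H)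

/-- If the 2-cocycle μ associated to a projective action α : G → PU(H) (via a lift
𝒱 with 𝒱(g)𝒱(h) = μ(g,h)𝒱(gh)) is not a coboundary, then there is no unit vector
ψ whose vector state on B(H) is invariant under all Ad_{𝒱(g)}. -/
theorem no_invariant_vector_state_of_anomalous {G : Type*} [Group G]
    (α : G →* PU H) (V : G → unitary (H →L[ℂ] H))
    (hV : ∀ g : G, toPU H (V g) = α g)
    (μ : G → G → ℂ) (hμmod : ∀ g h : G, ‖μ g h‖ = 1)
    (hμ : ∀ g h : G,
      ((V g : H →L[ℂ] H)) * ((V h : H →L[ℂ] H))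
        = μ g h • ((V (g * h) : H →L[ℂ] H)))
    (hnontrivial : ¬ ∃ φ : G → ℂ, (∀ g : G, ‖φ g‖ = 1) ∧
      ∀ g h : G, μ g h = φ g * φ h * (φ (g * h))⁻¹) :
    ¬ ∃ ψ : H, ‖ψ‖ = 1 ∧
      ∀ (g : G) (A : H →L[ℂ] H),
        (inner ℂ ψ ((((V g : H →L[ℂ] H)) * A * star ((V g : H →L[ℂ] H))) ψ) : ℂ)
          = inner ℂ ψ (A ψ) := by
  rintro ⟨ψ, hψ, hinv⟩
  set φ : G → ℂ := fun g => (inner ℂ ψ ((V g : H →L[ℂ] H) ψ) : ℂ) with hφdef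
  have hψψ : (inner ℂ ψ ψ : ℂ) = 1 := by
    rw [inner_self_eq_norm_sq_to_K, hψ]; norm_num
  have key : ∀ g : G, (starRingEnd ℂ) (φ g) * φ g = 1 := by
    intro g
    have h := hinv g ((innerSL ℂ ψ).smulRight ψ)
    simp only [ContinuousLinearMap.mul_apply, ContinuousLinearMap.smulRight_apply,
      innerSL_apply_apply, map_smul, inner_smul_right] at h
    rw [ContinuousLinearMap.star_eq_adjoint, ContinuousLinearMap.adjoint_inner_right,
      ← inner_conj_symm ((V g : H →L[ℂ] H) ψ) ψ, hψψ, mul_one] at h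
    exact h
  have hφnorm : ∀ g : G, ‖φ g‖ = 1 := by
    intro g
    have h2 := congrArg norm (key g)
    rw [norm_mul, RCLike.norm_conj, norm_one] at h2
    rcases mul_self_eq_one_iff.mp h2 with h | h
    · exact h
    · nlinarith [norm_nonneg (φ g)]
  have heig : ∀ g : G, (V g : H →L[ℂ] H) ψ = φ g • ψ := by
    intro g
    have hnv : ‖(starRingEnd ℂ) (φ g) • ((V g : H →L[ℂ] H) ψ)‖ = 1 := by
      rw [norm_smul, RCLike.norm_conj, hφnorm g,
        (V g).val.norm_map_of_mem_unitary (V g).2, hψ, one_mul]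
    have h1 : (inner ℂ ψ ((starRingEnd ℂ) (φ g) • ((V g : H →L[ℂ] H) ψ)) : ℂ) = 1 := by
      rw [inner_smul_right]; exact key g
    have h3 := congrArg (fun v => φ g • v) ((inner_eq_one_iff_of_norm_eq_one hψ hnv).mp h1)
    simp only [smul_smul, mul_comm (φ g), key g, one_smul] at h3
    exact h3.symm
  have hψne : ψ ≠ 0 := by
    intro h; rw [h, norm_zero] at hψ; exact one_ne_zero hψ.symm
  refine hnontrivial ⟨φ, hφnorm, fun g h => ?_⟩
  have := congrArg (fun T : H →L[ℂ] H => T ψ) (hμ g h)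
  simp only [ContinuousLinearMap.mul_apply, ContinuousLinearMap.smul_apply,
    heig, map_smul, smul_smul] at this
  have hsc : φ g * φ h = μ g h * φ (g * h) := by
    exact smul_left_injective ℂ hψne (by rw [mul_comm (φ g)]; simpa using this)
  have hφne : φ (g * h) ≠ 0 := by
    intro hz; have := hφnorm (g * h); rw [hz, norm_zero] at this; norm_num at this
  field_simp [hsc]
  exact hsc.symm
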